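/- For every positive integer d and α ∈ (0,1) there is a constant K (depending only on d and α) such that the following holds. Let n ≥ 2k − t, k ≥ t ≥ max{αk, d} be positive integers, Σ a finite alphabet, and let {f_S : binom(S,≤d) → Σ | S ∈ binom([n],k)} satisfy Pr_{(S₁,S₂)∼ν_{n,k,t}}[f_{S₁} ≁ f_{S₂}] ≤ ε. For disjoint sets T, A ⊆ [n] with |T| = t − d and |A| = i (0 ≤ i ≤ d), define ε_{T,A} := Pr[ f_{S₁}|_{T,i−1} ∼ f_{S₂}|_{T,i−1} and f_{S₁}|_{T,A} ≁ f_{S₂}|_{T,A} ] where (S₁,S₂)∼ν_{n,k,t} conditioned on S₁∩S₂ ⊇ T∪A; here f_{S₁}|_{T,A} ∼ f_{S₂}|_{T,A} means f_{S₁}(U) = f_{S₂}(U) for all U ∈ binom(S₁∩S₂,≤d) with U∖T ⊆ A. Then E_{T,A}[ε_{T,A}] ≤ K·k^{−i}·ε, where the expectation is over uniformly random disjoint pairs (T,A) with |T| = t−d and |A| = i. -/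

import Mathlib

open Finset

/-- The family of `k`-element subsets of `[n]` (modeled as `Fin n`). -/
def ksets (n k : ℕ) : Finset (Finset (Fin n)) := Finset.univ.powersetCard k

/-- The support of `ν_{n,k,t}`: ordered pairs of `k`-element subsets of `[n]`
with intersection of size exactly `t` (the distribution is uniform on this set). -/
def nupairs (n k t : ℕ) : Finset (Finset (Fin n) × Finset (Fin n)) :=
  ((ksets n k) ×ˢ (ksets n k)).filter (fun P => (P.1 ∩ P.2).card = t)

/-- `ε_{T,A}`: probability, over `(S₁,S₂) ∼ ν_{n,k,t}` conditioned on
`S₁ ∩ S₂ ⊇ T ∪ A`, that `f_{S₁}|_{T,i-1} ∼ f_{S₂}|_{T,i-1}` (agreement on all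
`U ⊆ S₁ ∩ S₂` with `|U| ≤ d`, `|U ∖ T| < i`) but `f_{S₁}|_{T,A} ≁ f_{S₂}|_{T,A}`
(disagreement at some `U ⊆ S₁ ∩ S₂` with `|U| ≤ d`, `U ∖ T ⊆ A`). -/
noncomputable def epsTA (n k t d i : ℕ) (Γ : Type) [DecidableEq Γ]
    (f : Finset (Fin n) → Finset (Fin n) → Γ) (T A : Finset (Fin n)) : ℝ :=
  (((nupairs n k t).filter
      (fun P => T ∪ A ⊆ P.1 ∩ P.2 ∧
        (∀ U ⊆ P.1 ∩ P.2, U.card ≤ d → (U \ T).card < i → f P.1 U = f P.2 U) ∧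
        ¬ ∀ U ⊆ P.1 ∩ P.2, U.card ≤ d → U \ T ⊆ A → f P.1 U = f P.2 U)).card : ℝ) /
  (((nupairs n k t).filter (fun P => T ∪ A ⊆ P.1 ∩ P.2)).card : ℝ)

/-- Uniformly random disjoint pairs `(T,A)` with `|T| = m` and `|A| = i`. -/
def TApairs (n m i : ℕ) : Finset (Finset (Fin n) × Finset (Fin n)) :=
  ((Finset.univ.powersetCard m) ×ˢ (Finset.univ.powersetCard i)).filter
    (fun P => Disjoint P.1 P.2)

section AuxStmt10

lemma mem_nupairs {n k t : ℕ} {P : Finset (Fin n) × Finset (Fin n)} :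
    P ∈ nupairs n k t ↔ P.1.card = k ∧ P.2.card = k ∧ (P.1 ∩ P.2).card = t := by
  simp [nupairs, ksets, Finset.mem_filter, Finset.mem_product,
    Finset.mem_powersetCard_univ, and_assoc]

lemma mem_TApairs {n a b : ℕ} {Q : Finset (Fin n) × Finset (Fin n)} :
    Q ∈ TApairs n a b ↔ Q.1.card = a ∧ Q.2.card = b ∧ Disjoint Q.1 Q.2 := by
  simp [TApairs, Finset.mem_filter, Finset.mem_product,
    Finset.mem_powersetCard_univ, and_assoc]

lemma exists_nupair_superset {n k t : ℕ} (htk : t ≤ k) (hn : 2 * k ≤ n + t)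
    {B : Finset (Fin n)} (hB : B.card ≤ t) :
    ∃ P ∈ nupairs n k t, B ⊆ P.1 ∩ P.2 := by
  classical
  have hkn : k ≤ n := by omega
  have hcu : (Finset.univ : Finset (Fin n)).card = n := by simp
  obtain ⟨I, hBI, hIu, hI⟩ := Finset.exists_subsuperset_card_eq (Finset.subset_univ B) hB
    (show t ≤ _ by omega)
  obtain ⟨S₁, hIS₁, hS₁u, hS₁⟩ := Finset.exists_subsuperset_card_eq (Finset.subset_univ I)
    (show I.card ≤ k by omega) (show k ≤ _ by omega)
  have hdisj : Disjoint I S₁ᶜ := by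
    rw [Finset.disjoint_left]
    intro x hx hx'
    exact (Finset.mem_compl.1 hx') (hIS₁ hx)
  have hcardc : (S₁ᶜ : Finset (Fin n)).card = n - k := by
    rw [Finset.card_compl, hS₁]; simp
  have hcardUnion : (I ∪ S₁ᶜ).card = t + (n - k) := by
    rw [Finset.card_union_of_disjoint hdisj, hI, hcardc]
  obtain ⟨S₂, hIS₂, hS₂u, hS₂⟩ := Finset.exists_subsuperset_card_eq
    (Finset.subset_union_left : I ⊆ I ∪ S₁ᶜ) (show I.card ≤ k by omega)
    (show k ≤ _ by omega)
  have hint : S₁ ∩ S₂ = I := by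
    apply Finset.Subset.antisymm
    · intro x hx
      rw [Finset.mem_inter] at hx
      have := hS₂u hx.2
      rw [Finset.mem_union] at this
      rcases this with h | h
      · exact h
      · exact absurd hx.1 (Finset.mem_compl.1 h)
    · exact Finset.subset_inter hIS₁ hIS₂
  refine ⟨(S₁, S₂), mem_nupairs.2 ⟨hS₁, hS₂, ?_⟩, ?_⟩
  · rw [hint, hI]
  · rw [hint]; exact hBI

lemma perm_exists {n : ℕ} {B B' : Finset (Fin n)} (h : B.card = B'.card) :
    ∃ e : Equiv.Perm (Fin n), B.image e = B' := by
  classical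
  have h1 : Fintype.card {x : Fin n // x ∈ B} = Fintype.card {x : Fin n // x ∈ B'} := by
    simpa [Fintype.card_coe] using h
  have h2 : Fintype.card {x : Fin n // ¬ x ∈ B} = Fintype.card {x : Fin n // ¬ x ∈ B'} := by
    rw [Fintype.card_subtype_compl, Fintype.card_subtype_compl, h1]
  set e1 := Fintype.equivOfCardEq h1
  set e2 := Fintype.equivOfCardEq h2
  refine ⟨Equiv.subtypeCongr e1 e2, ?_⟩
  have hmem : ∀ x ∈ B, Equiv.subtypeCongr e1 e2 x ∈ B' := by
    intro x hx
    have : Equiv.subtypeCongr e1 e2 x = (e1 ⟨x, hx⟩ : Fin n) := by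
      simp [Equiv.subtypeCongr, Equiv.sumCompl_symm_apply_of_pos hx]
    rw [this]
    exact (e1 ⟨x, hx⟩).2
  apply Finset.eq_of_subset_of_card_le
  · intro y hy
    obtain ⟨x, hx, rfl⟩ := Finset.mem_image.1 hy
    exact hmem x hx
  · rw [Finset.card_image_of_injective _ (Equiv.injective _), h]

lemma count_const {n k t : ℕ} {B B' : Finset (Fin n)} (h : B.card = B'.card) :
    ((nupairs n k t).filter fun P => B ⊆ P.1 ∩ P.2).card =
    ((nupairs n k t).filter fun P => B' ⊆ P.1 ∩ P.2).card := by
  classical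
  obtain ⟨e, he⟩ := perm_exists h
  have he' : B'.image e.symm = B := by
    rw [← he, Finset.image_image]
    simp
  apply Finset.card_nbij' (i := fun P => (P.1.image e, P.2.image e))
      (j := fun P => (P.1.image e.symm, P.2.image e.symm))
  · intro P hP
    rw [Finset.mem_coe, Finset.mem_filter] at hP ⊢
    obtain ⟨hP1, hP2⟩ := hP
    obtain ⟨ha, hb, hc⟩ := mem_nupairs.1 hP1
    have hint : (P.1.image e) ∩ (P.2.image e) = (P.1 ∩ P.2).image e :=
      (Finset.image_inter _ _ (Equiv.injective e)).symm
    constructor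
    · refine mem_nupairs.2 ⟨?_, ?_, ?_⟩
      · rw [Finset.card_image_of_injective _ (Equiv.injective e), ha]
      · rw [Finset.card_image_of_injective _ (Equiv.injective e), hb]
      · rw [hint, Finset.card_image_of_injective _ (Equiv.injective e), hc]
    · rw [hint, ← he]
      exact Finset.image_subset_image hP2
  · intro P hP
    rw [Finset.mem_coe, Finset.mem_filter] at hP ⊢
    obtain ⟨hP1, hP2⟩ := hP
    obtain ⟨ha, hb, hc⟩ := mem_nupairs.1 hP1
    have hint : (P.1.image e.symm) ∩ (P.2.image e.symm) = (P.1 ∩ P.2).image e.symm :=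
      (Finset.image_inter _ _ (Equiv.injective e.symm)).symm
    constructor
    · refine mem_nupairs.2 ⟨?_, ?_, ?_⟩
      · rw [Finset.card_image_of_injective _ (Equiv.injective e.symm), ha]
      · rw [Finset.card_image_of_injective _ (Equiv.injective e.symm), hb]
      · rw [hint, Finset.card_image_of_injective _ (Equiv.injective e.symm), hc]
    · rw [hint, ← he']
      exact Finset.image_subset_image hP2
  · intro P hP
    apply Prod.ext <;> · simp [Finset.image_image]
  · intro P hP
    apply Prod.ext <;> · simp [Finset.image_image]

lemma Dsum (n k t m : ℕ) :
    ∑ B ∈ (Finset.univ : Finset (Fin n)).powersetCard m,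
        ((nupairs n k t).filter fun P => B ⊆ P.1 ∩ P.2).card
      = (nupairs n k t).card * t.choose m := by
  classical
  have step : ∀ B : Finset (Fin n),
      ((nupairs n k t).filter fun P => B ⊆ P.1 ∩ P.2).card
        = ∑ P ∈ nupairs n k t, ite (B ⊆ P.1 ∩ P.2) 1 0 := fun B =>
    Finset.card_filter _ _
  simp only [step]
  rw [Finset.sum_comm]
  rw [Finset.card_eq_sum_ones (nupairs n k t), Finset.sum_mul]
  apply Finset.sum_congr rfl
  intro P hP
  have hI : (P.1 ∩ P.2).card = t := (mem_nupairs.1 hP).2.2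
  have : ∑ B ∈ (Finset.univ : Finset (Fin n)).powersetCard m, ite (B ⊆ P.1 ∩ P.2) 1 0
      = (((Finset.univ : Finset (Fin n)).powersetCard m).filter
          (fun B => B ⊆ P.1 ∩ P.2)).card := (Finset.card_filter _ _).symm
  rw [this, one_mul]
  have hfe : ((Finset.univ : Finset (Fin n)).powersetCard m).filter
      (fun B => B ⊆ P.1 ∩ P.2) = (P.1 ∩ P.2).powersetCard m := by
    ext B
    simp [Finset.mem_powersetCard, Finset.mem_filter, Finset.mem_powersetCard_univ, and_comm]
  rw [hfe, Finset.card_powersetCard, hI]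

lemma D_eq {n k t m : ℕ} {B : Finset (Fin n)} (hB : B.card = m) :
    (n.choose m) * ((nupairs n k t).filter fun P => B ⊆ P.1 ∩ P.2).card
      = (nupairs n k t).card * t.choose m := by
  classical
  rw [← Dsum n k t m]
  rw [Finset.sum_congr rfl (fun B' hB' => count_const
    (show B'.card = B.card by rw [Finset.mem_powersetCard_univ.1 hB', hB]))]
  rw [Finset.sum_const, Finset.card_powersetCard, smul_eq_mul]
  congr 1
  simp

lemma card_filter_swap {α β : Type*} {s : Finset α} {u : Finset β} (g : α → β → Prop)
    [∀ a b, Decidable (g a b)] :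
    ∑ a ∈ s, (u.filter (fun b => g a b)).card
      = ∑ b ∈ u, (s.filter (fun a => g a b)).card := by
  simp only [Finset.card_filter]
  exact Finset.sum_comm

lemma TApairs_card (n a b : ℕ) :
    (TApairs n a b).card = n.choose a * (n - a).choose b := by
  classical
  have hbij : TApairs n a b
      = ((Finset.univ : Finset (Fin n)).powersetCard a).biUnion
          (fun T => ((Tᶜ).powersetCard b).image (fun A => (T, A))) := by
    ext Q
    simp only [Finset.mem_biUnion, Finset.mem_image, mem_TApairs,
      Finset.mem_powersetCard, Finset.mem_powersetCard_univ]
    constructor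
    · rintro ⟨h1, h2, h3⟩
      refine ⟨Q.1, ⟨Finset.subset_univ _, h1⟩, Q.2, ⟨?_, h2⟩, rfl⟩
      intro x hx
      rw [Finset.mem_compl]
      exact fun hx' => (Finset.disjoint_left.1 h3) hx' hx
    · rintro ⟨T, hT, A, ⟨hA1, hA2⟩, rfl⟩
      refine ⟨hT.2, hA2, ?_⟩
      rw [Finset.disjoint_right]
      intro x hx
      exact Finset.mem_compl.1 (hA1 hx)
  rw [hbij, Finset.card_biUnion]
  · have : ∀ T ∈ (Finset.univ : Finset (Fin n)).powersetCard a,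
        (((Tᶜ).powersetCard b).image (fun A => (T, A))).card = (n - a).choose b := by
      intro T hT
      rw [Finset.card_image_of_injective _ (fun x y h => by simpa using h),
        Finset.card_powersetCard, Finset.card_compl,
        Finset.mem_powersetCard_univ.1 hT, Fintype.card_fin]
    rw [Finset.sum_congr rfl this, Finset.sum_const, Finset.card_powersetCard,
      smul_eq_mul]
    congr 1
    simp
  · intro T hT T' hT' hne
    rw [Function.onFun, Finset.disjoint_left]
    rintro ⟨x1, x2⟩ h1 h2
    obtain ⟨A, -, hA⟩ := Finset.mem_image.1 h1
    obtain ⟨A', -, hA'⟩ := Finset.mem_image.1 h2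
    injection hA with e1 e2
    injection hA' with e1' e2'
    exact hne (e1.trans e1'.symm)

lemma countTA_le {n t d i : ℕ} (hi : i ≤ d) (hd : d ≤ t) {I U₀ : Finset (Fin n)}
    (hI : I.card = t) (hU₀I : U₀ ⊆ I) (hU₀ : U₀.card ≤ d) :
    ((TApairs n (t - d) i).filter
        (fun Q => Q.1 ∪ Q.2 ⊆ I ∧ i ≤ (U₀ \ Q.1).card)).card
      ≤ d.choose i * (d.choose i * (t - i).choose (t - d)) := by
  classical
  set 𝒯 := (I.powersetCard (t - d)).filter (fun T => i ≤ (U₀ \ T).card) with h𝒯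
  have step1 : ((TApairs n (t - d) i).filter
        (fun Q => Q.1 ∪ Q.2 ⊆ I ∧ i ≤ (U₀ \ Q.1).card))
      ⊆ 𝒯.biUnion (fun T => ((I \ T).powersetCard i).image (fun A => (T, A))) := by
    intro Q hQ
    rw [Finset.mem_filter] at hQ
    obtain ⟨hQ1, hQ2, hQ3⟩ := hQ
    obtain ⟨hc1, hc2, hdisj⟩ := mem_TApairs.1 hQ1
    rw [Finset.mem_biUnion]
    refine ⟨Q.1, ?_, ?_⟩
    · rw [h𝒯, Finset.mem_filter, Finset.mem_powersetCard]
      exact ⟨⟨(Finset.subset_union_left).trans hQ2, hc1⟩, hQ3⟩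
    · rw [Finset.mem_image]
      refine ⟨Q.2, ?_, rfl⟩
      rw [Finset.mem_powersetCard]
      exact ⟨Finset.subset_sdiff.2 ⟨(Finset.subset_union_right).trans hQ2, hdisj.symm⟩, hc2⟩
  have step2 : 𝒯 ⊆ (U₀.powersetCard i).biUnion (fun J => (I \ J).powersetCard (t - d)) := by
    intro T hT
    rw [h𝒯, Finset.mem_filter, Finset.mem_powersetCard] at hT
    obtain ⟨⟨hTI, hTc⟩, hTU⟩ := hT
    obtain ⟨J, hJsub, hJc⟩ := Finset.exists_subset_card_eq hTU
    rw [Finset.mem_biUnion]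
    refine ⟨J, ?_, ?_⟩
    · rw [Finset.mem_powersetCard]
      exact ⟨hJsub.trans (Finset.sdiff_subset), hJc⟩
    · rw [Finset.mem_powersetCard]
      refine ⟨Finset.subset_sdiff.2 ⟨hTI, ?_⟩, hTc⟩
      rw [Finset.disjoint_right]
      intro x hx
      exact (Finset.mem_sdiff.1 (hJsub hx)).2
  have h𝒯card : 𝒯.card ≤ d.choose i * (t - i).choose (t - d) := by
    calc 𝒯.card ≤ ((U₀.powersetCard i).biUnion (fun J => (I \ J).powersetCard (t - d))).card :=
          Finset.card_le_card step2
      _ ≤ ∑ J ∈ U₀.powersetCard i, ((I \ J).powersetCard (t - d)).card :=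
          Finset.card_biUnion_le
      _ ≤ ∑ J ∈ U₀.powersetCard i, (t - i).choose (t - d) := by
          apply Finset.sum_le_sum
          intro J hJ
          rw [Finset.mem_powersetCard] at hJ
          rw [Finset.card_powersetCard, Finset.card_sdiff_of_subset (hJ.1.trans hU₀I), hI, hJ.2]
      _ = U₀.card.choose i * (t - i).choose (t - d) := by
          rw [Finset.sum_const, Finset.card_powersetCard, smul_eq_mul]
      _ ≤ d.choose i * (t - i).choose (t - d) :=
          Nat.mul_le_mul_right _ (Nat.choose_le_choose i hU₀)
  calc ((TApairs n (t - d) i).filter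
        (fun Q => Q.1 ∪ Q.2 ⊆ I ∧ i ≤ (U₀ \ Q.1).card)).card
      ≤ (𝒯.biUnion (fun T => ((I \ T).powersetCard i).image (fun A => (T, A)))).card :=
        Finset.card_le_card step1
    _ ≤ ∑ T ∈ 𝒯, (((I \ T).powersetCard i).image (fun A => (T, A))).card :=
        Finset.card_biUnion_le
    _ ≤ ∑ T ∈ 𝒯, d.choose i := by
        apply Finset.sum_le_sum
        intro T hT
        rw [h𝒯, Finset.mem_filter, Finset.mem_powersetCard] at hT
        calc (((I \ T).powersetCard i).image (fun A => (T, A))).card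
            ≤ ((I \ T).powersetCard i).card := Finset.card_image_le
          _ = (I \ T).card.choose i := Finset.card_powersetCard _ _
          _ = d.choose i := by
              rw [Finset.card_sdiff_of_subset hT.1.1, hI, hT.1.2]
              congr 1
              omega
    _ = 𝒯.card * d.choose i := by rw [Finset.sum_const, smul_eq_mul]
    _ ≤ (d.choose i * (t - i).choose (t - d)) * d.choose i :=
        Nat.mul_le_mul_right _ h𝒯card
    _ = d.choose i * (d.choose i * (t - i).choose (t - d)) := by ring

lemma star_bound {d i k t : ℕ} {α : ℝ} (hd : 0 < d) (hα0 : 0 < α) (hα1 : α < 1)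
    (hi : i ≤ d) (hdt : d ≤ t) (hαk : α * (k:ℝ) ≤ (t:ℝ)) :
    (k:ℝ)^i * ((d.choose i : ℝ))^2
      ≤ (4:ℝ)^d * (2*(d:ℝ)^2/α)^d * (t.choose i : ℝ) := by
  have hd1 : (1:ℝ) ≤ (d:ℝ) := by exact_mod_cast hd
  have hbase : (1:ℝ) ≤ 2*(d:ℝ)^2/α := by
    rw [le_div_iff₀ hα0]
    nlinarith
  have hti : i ≤ t := le_trans hi hdt
  have hcast1 : ((t + 1 - i : ℕ) : ℝ) = (t:ℝ) + 1 - (i:ℝ) := by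
    rw [Nat.cast_sub (by omega)]
    push_cast
    ring
  have hiR : (i:ℝ) ≤ (d:ℝ) := by exact_mod_cast hi
  have hdtR : (d:ℝ) ≤ (t:ℝ) := by exact_mod_cast hdt
  have htiR : (i:ℝ) ≤ (t:ℝ) := by exact_mod_cast hti
  have hk2 : (k:ℝ) ≤ (2*(d:ℝ)/α) * ((t + 1 - i : ℕ) : ℝ) := by
    rw [hcast1, div_mul_eq_mul_div, le_div_iff₀ hα0]
    rcases le_or_gt (2*(d:ℝ)) (t:ℝ) with hcase | hcase
    · nlinarith [mul_nonneg (by linarith : (0:ℝ) ≤ 2*(d:ℝ)-1)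
        (by linarith : (0:ℝ) ≤ (t:ℝ) - 2*(d:ℝ)),
        mul_nonneg (by linarith : (0:ℝ) ≤ 2*(d:ℝ))
        (by linarith : (0:ℝ) ≤ 2*(d:ℝ) - (i:ℝ))]
    · nlinarith [mul_nonneg (by linarith : (0:ℝ) ≤ 2*(d:ℝ))
        (by linarith : (0:ℝ) ≤ (t:ℝ) - (i:ℝ))]
  have hA1 : (k:ℝ)^i ≤ ((2*(d:ℝ)/α) * ((t+1-i:ℕ):ℝ))^i :=
    pow_le_pow_left₀ (by positivity) hk2 i
  rw [mul_pow] at hA1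
  have hA3 : (((t+1-i:ℕ):ℝ))^i ≤ (d:ℝ)^i * (t.choose i : ℝ) := by
    have hn1 : (t+1-i)^i ≤ t.descFactorial i := Nat.pow_sub_le_descFactorial t i
    have hn2 : t.descFactorial i = i.factorial * t.choose i :=
      Nat.descFactorial_eq_factorial_mul_choose t i
    have hn3 : i.factorial ≤ d^i :=
      le_trans (Nat.factorial_le_pow i) (Nat.pow_le_pow_left hi i)
    have : (t+1-i)^i ≤ d^i * t.choose i := by
      rw [hn2] at hn1
      exact le_trans hn1 (Nat.mul_le_mul_right _ hn3)
    exact_mod_cast this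
  have hA4 : (k:ℝ)^i ≤ (2*(d:ℝ)/α)^i * ((d:ℝ)^i * (t.choose i : ℝ)) :=
    le_trans hA1 (mul_le_mul_of_nonneg_left hA3 (by positivity))
  have hA5 : (2*(d:ℝ)/α)^i * (d:ℝ)^i = (2*(d:ℝ)^2/α)^i := by
    rw [← mul_pow]
    congr 1
    rw [div_mul_eq_mul_div]
    ring_nf
  have hA6 : (k:ℝ)^i ≤ (2*(d:ℝ)^2/α)^i * (t.choose i : ℝ) := by
    rw [← mul_assoc, hA5] at hA4
    exact hA4
  have hA7 : (2*(d:ℝ)^2/α)^i ≤ (2*(d:ℝ)^2/α)^d := pow_le_pow_right₀ hbase hi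
  have hA8 : ((d.choose i : ℝ))^2 ≤ (4:ℝ)^d := by
    have h1 : d.choose i ≤ 2^d := by
      calc d.choose i ≤ ∑ j ∈ Finset.range (d+1), d.choose j :=
          Finset.single_le_sum (f := fun j => d.choose j) (fun j _ => Nat.zero_le _)
            (Finset.mem_range.2 (by omega))
        _ = 2^d := Nat.sum_range_choose d
    have h1R : ((d.choose i : ℕ):ℝ) ≤ (2:ℝ)^d := by exact_mod_cast h1
    calc ((d.choose i:ℝ))^2 ≤ ((2:ℝ)^d)^2 :=
          pow_le_pow_left₀ (by positivity) h1R 2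
      _ = 4^d := by rw [← pow_mul, mul_comm, pow_mul]; norm_num
  calc (k:ℝ)^i * ((d.choose i : ℝ))^2
      ≤ ((2*(d:ℝ)^2/α)^i * ((t.choose i:ℝ))) * ((4:ℝ)^d) :=
        mul_le_mul hA6 hA8 (by positivity) (by positivity)
    _ ≤ ((2*(d:ℝ)^2/α)^d * ((t.choose i:ℝ))) * ((4:ℝ)^d) := by
        have := mul_le_mul_of_nonneg_right hA7 (show (0:ℝ) ≤ (t.choose i:ℝ) by positivity)
        exact mul_le_mul_of_nonneg_right this (by positivity)
    _ = (4:ℝ)^d * (2*(d:ℝ)^2/α)^d * (t.choose i : ℝ) := by ring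

end AuxStmt10

set_option maxHeartbeats 1000000 in
theorem stmt10 :
    ∀ (d : ℕ), 0 < d → ∀ α : ℝ, α ∈ Set.Ioo (0:ℝ) 1 →
      ∃ K : ℝ,
        ∀ (n k t : ℕ), t ≤ k → 2 * k ≤ n + t →
          α * (k : ℝ) ≤ (t : ℝ) → d ≤ t →
          ∀ (Γ : Type) [Fintype Γ] [DecidableEq Γ]
            (f : Finset (Fin n) → Finset (Fin n) → Γ) (ε : ℝ),
            (((nupairs n k t).filter
                (fun P => ¬ ∀ A ⊆ P.1 ∩ P.2, A.card ≤ d → f P.1 A = f P.2 A)).card : ℝ) ≤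
              ε * ((nupairs n k t).card : ℝ) →
            ∀ i : ℕ, i ≤ d →
              (∑ P ∈ TApairs n (t-d) i, epsTA n k t d i Γ f P.1 P.2) * (k : ℝ)^i ≤
                K * ε * ((TApairs n (t-d) i).card : ℝ) := by
  intro d hd α hα
  obtain ⟨hα0, hα1⟩ := hα
  refine ⟨4^d * (2*(d:ℝ)^2/α)^d, ?_⟩
  intro n k t htk hnt hαk hdt Γ _ _ f ε hε i hi
  classical
  set m := t - d + i with hm
  have hmt : m ≤ t := by omega
  have hkn : k ≤ n := by omega
  have htn : t ≤ n := le_trans htk hkn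
  set Q := (nupairs n k t).card with hQdef
  have hQpos : 0 < Q := by
    obtain ⟨P, hP, -⟩ := exists_nupair_superset htk hnt (B := (∅ : Finset (Fin n))) (by simp)
    exact Finset.card_pos.2 ⟨P, hP⟩
  have hQR : (0:ℝ) < (Q:ℝ) := by exact_mod_cast hQpos
  have hε0 : 0 ≤ ε := by
    have h0 : (0:ℝ) ≤ ε * Q := le_trans (Nat.cast_nonneg _) hε
    nlinarith
  set Bad := (nupairs n k t).filter
      (fun P => ¬ ∀ A ⊆ P.1 ∩ P.2, A.card ≤ d → f P.1 A = f P.2 A) with hBadDef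
  set Wex : Finset (Fin n) × Finset (Fin n) → Prop := fun R =>
    ∃ U, U ⊆ R.1 ∩ R.2 ∧ U.card ≤ d ∧ ¬ f R.1 U = f R.2 U with hWex
  set W : Finset (Fin n) × Finset (Fin n) → Finset (Fin n) := fun R =>
    if h : Wex R then h.choose else ∅ with hWdef
  have hWspec : ∀ R ∈ Bad, W R ⊆ R.1 ∩ R.2 ∧ (W R).card ≤ d ∧ ¬ f R.1 (W R) = f R.2 (W R) := by
    intro R hR
    have hR' := (Finset.mem_filter.1 hR).2
    push_neg at hR'
    obtain ⟨U, h1, h2, h3⟩ := hR'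
    have hex : Wex R := ⟨U, h1, h2, h3⟩
    have hspec := hex.choose_spec
    simp only [hWdef, dif_pos hex]
    exact hspec
  have hchoosePos : (0:ℝ) < (n.choose m : ℝ) := by
    exact_mod_cast Nat.choose_pos (le_trans hmt htn)
  have hchoosetm : (0:ℝ) < (t.choose m : ℝ) := by exact_mod_cast Nat.choose_pos hmt
  -- pointwise bound on epsTA
  have hEps : ∀ P ∈ TApairs n (t-d) i,
      epsTA n k t d i Γ f P.1 P.2 ≤
        ((Bad.filter (fun R => P.1 ∪ P.2 ⊆ R.1 ∩ R.2 ∧ i ≤ ((W R) \ P.1).card)).card : ℝ)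
          * (n.choose m : ℝ) / ((Q : ℝ) * (t.choose m : ℝ)) := by
    intro P hP
    obtain ⟨hP1, hP2, hPdisj⟩ := mem_TApairs.1 hP
    have hcardU : (P.1 ∪ P.2).card = m := by
      rw [Finset.card_union_of_disjoint hPdisj, hP1, hP2]
    have hD := D_eq (n := n) (k := k) (t := t) hcardU
    have hDpos : (0:ℝ) < (((nupairs n k t).filter
        (fun R => P.1 ∪ P.2 ⊆ R.1 ∩ R.2)).card : ℝ) := by
      have : m ≤ t := hmt
      obtain ⟨R, hR, hRsub⟩ := exists_nupair_superset htk hnt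
        (B := P.1 ∪ P.2) (by omega)
      exact_mod_cast Finset.card_pos.2 ⟨R, Finset.mem_filter.2 ⟨hR, hRsub⟩⟩
    have hNum : (((nupairs n k t).filter
        (fun R => P.1 ∪ P.2 ⊆ R.1 ∩ R.2 ∧
          (∀ U ⊆ R.1 ∩ R.2, U.card ≤ d → (U \ P.1).card < i → f R.1 U = f R.2 U) ∧
          ¬ ∀ U ⊆ R.1 ∩ R.2, U.card ≤ d → U \ P.1 ⊆ P.2 → f R.1 U = f R.2 U)).card)
        ≤ ((Bad.filter (fun R => P.1 ∪ P.2 ⊆ R.1 ∩ R.2 ∧ i ≤ ((W R) \ P.1).card)).card) := by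
      apply Finset.card_le_card
      intro R hR
      rw [Finset.mem_filter] at hR ⊢
      obtain ⟨hRn, hc1, hc2, hc3⟩ := hR
      have hRBad : R ∈ Bad := by
        rw [hBadDef, Finset.mem_filter]
        refine ⟨hRn, ?_⟩
        intro hall
        exact hc3 (fun U hU hUd _ => hall U hU hUd)
      refine ⟨hRBad, hc1, ?_⟩
      obtain ⟨hw1, hw2, hw3⟩ := hWspec R hRBad
      by_contra hlt
      push_neg at hlt
      exact hw3 (hc2 (W R) hw1 hw2 hlt)
    have hDeqR : (Q : ℝ) * (t.choose m : ℝ)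
        = (n.choose m : ℝ) * (((nupairs n k t).filter
            (fun R => P.1 ∪ P.2 ⊆ R.1 ∩ R.2)).card : ℝ) := by
      exact_mod_cast hD.symm
    unfold epsTA
    rw [hDeqR, mul_comm ((Bad.filter (fun R => P.1 ∪ P.2 ⊆ R.1 ∩ R.2 ∧
        i ≤ ((W R) \ P.1).card)).card : ℝ) ((n.choose m : ℝ)),
      mul_div_mul_left _ _ (ne_of_gt hchoosePos)]
    exact (div_le_div_iff_of_pos_right hDpos).2 (by exact_mod_cast hNum)
  set c : ℕ := d.choose i * (d.choose i * (t - i).choose (t - d)) with hc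
  -- sum of numerators bound
  have hNsum : (∑ P ∈ TApairs n (t-d) i,
      (Bad.filter (fun R => P.1 ∪ P.2 ⊆ R.1 ∩ R.2 ∧ i ≤ ((W R) \ P.1).card)).card)
        ≤ Bad.card * c := by
    rw [card_filter_swap (s := TApairs n (t-d) i) (u := Bad)
      (fun (P R : Finset (Fin n) × Finset (Fin n)) =>
        P.1 ∪ P.2 ⊆ R.1 ∩ R.2 ∧ i ≤ ((W R) \ P.1).card)]
    calc ∑ R ∈ Bad, ((TApairs n (t-d) i).filter
          (fun P => P.1 ∪ P.2 ⊆ R.1 ∩ R.2 ∧ i ≤ ((W R) \ P.1).card)).card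
        ≤ ∑ _R ∈ Bad, c := by
          apply Finset.sum_le_sum
          intro R hR
          have hRn : R ∈ nupairs n k t := (Finset.mem_filter.1 hR).1
          obtain ⟨-, -, h3⟩ := mem_nupairs.1 hRn
          obtain ⟨hw1, hw2, -⟩ := hWspec R hR
          rw [hc]
          exact countTA_le hi hdt h3 hw1 hw2
      _ = Bad.card * c := by rw [Finset.sum_const, smul_eq_mul]
  have hSum : (∑ P ∈ TApairs n (t-d) i, epsTA n k t d i Γ f P.1 P.2)
      ≤ ((Bad.card * c : ℕ) : ℝ) * (n.choose m : ℝ) / ((Q : ℝ) * (t.choose m : ℝ)) := by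
    calc (∑ P ∈ TApairs n (t-d) i, epsTA n k t d i Γ f P.1 P.2)
        ≤ ∑ P ∈ TApairs n (t-d) i,
            ((Bad.filter (fun R => P.1 ∪ P.2 ⊆ R.1 ∩ R.2 ∧ i ≤ ((W R) \ P.1).card)).card : ℝ)
              * (n.choose m : ℝ) / ((Q : ℝ) * (t.choose m : ℝ)) := Finset.sum_le_sum hEps
      _ = ((∑ P ∈ TApairs n (t-d) i,
            (Bad.filter (fun R => P.1 ∪ P.2 ⊆ R.1 ∩ R.2 ∧ i ≤ ((W R) \ P.1).card)).card : ℕ)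
              : ℝ) * (n.choose m : ℝ) / ((Q : ℝ) * (t.choose m : ℝ)) := by
          rw [← Finset.sum_div, ← Finset.sum_mul, Nat.cast_sum]
      _ ≤ _ := by
          have hNsum' : ((∑ P ∈ TApairs n (t-d) i,
              (Bad.filter (fun R => P.1 ∪ P.2 ⊆ R.1 ∩ R.2 ∧
                i ≤ ((W R) \ P.1).card)).card : ℕ) : ℝ) ≤ ((Bad.card * c : ℕ) : ℝ) := by
            exact_mod_cast hNsum
          gcongr
  -- binomial identities
  have idA : n.choose (t - d) * (n - (t - d)).choose i = n.choose m * m.choose i := by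
    have h1 := Nat.choose_mul (n := n) (show t - d ≤ m by omega)
    have h2 : m - (t - d) = i := by omega
    have h3 : m.choose i = m.choose (t - d) := by
      rw [← h2]
      exact Nat.choose_symm (by omega)
    rw [h2] at h1
    rw [h3]
    exact h1.symm
  have idB : t.choose m * m.choose i = t.choose i * (t - i).choose (t - d) := by
    have h1 := Nat.choose_mul (n := t) (show i ≤ m by omega)
    have h2 : m - i = t - d := by omega
    rw [h2] at h1
    exact h1
  have hstar : (k:ℝ)^i * ((d.choose i : ℝ))^2
      ≤ (4:ℝ)^d * (2*(d:ℝ)^2/α)^d * (t.choose i : ℝ) :=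
    star_bound hd hα0 hα1 hi hdt hαk
  -- key product inequality
  have idAR : ((n.choose (t-d) * (n-(t-d)).choose i : ℕ):ℝ)
      = (n.choose m : ℝ) * (m.choose i:ℝ) := by exact_mod_cast idA
  have idBR : (t.choose m:ℝ) * (m.choose i:ℝ)
      = (t.choose i:ℝ) * ((t-i).choose (t-d):ℝ) := by exact_mod_cast idB
  have hKey : ((c:ℕ):ℝ) * (k:ℝ)^i * (n.choose m : ℝ)
      ≤ (4^d * (2*(d:ℝ)^2/α)^d) * ((n.choose (t-d) * (n-(t-d)).choose i : ℕ) : ℝ)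
          * (t.choose m : ℝ) := by
    have h0 : (0:ℝ) ≤ ((t-i).choose (t-d) : ℝ) * (n.choose m : ℝ) := by positivity
    have h2 := mul_le_mul_of_nonneg_right hstar h0
    calc ((c:ℕ):ℝ) * (k:ℝ)^i * (n.choose m : ℝ)
        = ((k:ℝ)^i * ((d.choose i:ℝ))^2) * (((t-i).choose (t-d):ℝ) * (n.choose m:ℝ)) := by
          rw [hc]
          push_cast
          ring
      _ ≤ ((4:ℝ)^d * (2*(d:ℝ)^2/α)^d * (t.choose i:ℝ))
            * (((t-i).choose (t-d):ℝ) * (n.choose m:ℝ)) := h2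
      _ = ((4:ℝ)^d * (2*(d:ℝ)^2/α)^d * ((t.choose i:ℝ) * ((t-i).choose (t-d):ℝ)))
            * (n.choose m:ℝ) := by ring
      _ = ((4:ℝ)^d * (2*(d:ℝ)^2/α)^d * ((t.choose m:ℝ) * (m.choose i:ℝ)))
            * (n.choose m:ℝ) := by rw [idBR]
      _ = (4^d * (2*(d:ℝ)^2/α)^d) * ((n.choose m : ℝ) * (m.choose i:ℝ)) * (t.choose m : ℝ) := by
          ring
      _ = (4^d * (2*(d:ℝ)^2/α)^d) * ((n.choose (t-d) * (n-(t-d)).choose i : ℕ) : ℝ)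
            * (t.choose m : ℝ) := by rw [idAR]
  have hTAR : ((TApairs n (t-d) i).card : ℝ)
      = ((n.choose (t-d) * (n-(t-d)).choose i : ℕ) : ℝ) := by
    exact_mod_cast TApairs_card n (t-d) i
  -- final chain
  calc (∑ P ∈ TApairs n (t-d) i, epsTA n k t d i Γ f P.1 P.2) * (k:ℝ)^i
      ≤ (((Bad.card * c : ℕ):ℝ) * (n.choose m:ℝ) / ((Q:ℝ)*(t.choose m:ℝ))) * (k:ℝ)^i :=
        mul_le_mul_of_nonneg_right hSum (by positivity)
    _ = (Bad.card:ℝ) * ((c:ℝ) * (n.choose m:ℝ) * (k:ℝ)^i / ((Q:ℝ)*(t.choose m:ℝ))) := by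
        push_cast
        ring
    _ ≤ (ε * (Q:ℝ)) * ((c:ℝ) * (n.choose m:ℝ) * (k:ℝ)^i / ((Q:ℝ)*(t.choose m:ℝ))) :=
        mul_le_mul_of_nonneg_right hε (by positivity)
    _ = ε * ((c:ℝ) * (k:ℝ)^i * (n.choose m:ℝ)) / (t.choose m:ℝ) := by
        field_simp
    _ ≤ ε * ((4^d * (2*(d:ℝ)^2/α)^d) * ((n.choose (t-d) * (n-(t-d)).choose i : ℕ):ℝ)
          * (t.choose m:ℝ)) / (t.choose m:ℝ) := by
        exact (div_le_div_iff_of_pos_right hchoosetm).2 (mul_le_mul_of_nonneg_left hKey hε0)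
    _ = (4^d * (2*(d:ℝ)^2/α)^d) * ε * ((TApairs n (t-d) i).card : ℝ) := by
        rw [hTAR]
        field_simp
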